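/- Let R be a G-graded unital ring. Then R is G-controlled if and only if (a) every R_g is a simple R_e-bimodule, and (b) R_g ≅ R_h as R_e-bimodules if and only if g = h. -/

import Mathlib

open DirectSum Pointwise

namespace Controlled
set_option linter.unusedSectionVars false

variable {G R : Type*} [AddGroup G] [DecidableEq G] [Ring R]

/-- `P` is an `R_e`-sub-bimodule of `R` (w.r.t. the grading `𝒜`, written additively,
so `R_e = 𝒜 0`). -/
def IsSubBimodule (𝒜 : G → AddSubgroup R) (P : AddSubgroup R) : Prop :=
  ∀ a ∈ 𝒜 0, ∀ x ∈ P, a * x ∈ P ∧ x * a ∈ P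

/-- The `R_e`-bimodule `R_H = ⊕_{h ∈ H} R_h` (internally, the subgroup generated by
the `R_h`, `h ∈ H`; the sum is automatically direct). `R_∅ = ⊥ = {0}`. -/
def RH (𝒜 : G → AddSubgroup R) (H : Set G) : AddSubgroup R := ⨆ h ∈ H, 𝒜 h

/-- An `R_e`-bimodule isomorphism between additive subgroups `P` and `Q` of `R`:
an additive equivalence compatible with left and right multiplication by `R_e = 𝒜 0`. -/
structure BimodIso (𝒜 : G → AddSubgroup R) (P Q : AddSubgroup R) where
  toEquiv : P ≃+ Q
  map_left : ∀ (a x : R), a ∈ 𝒜 0 → ∀ (hx : x ∈ P) (hax : a * x ∈ P),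
    (toEquiv ⟨a * x, hax⟩ : R) = a * (toEquiv ⟨x, hx⟩ : R)
  map_right : ∀ (a x : R), a ∈ 𝒜 0 → ∀ (hx : x ∈ P) (hxa : x * a ∈ P),
    (toEquiv ⟨x * a, hxa⟩ : R) = (toEquiv ⟨x, hx⟩ : R) * a

/-- `R` is `G`-controlled: `H ↦ R_H` is a bijection from subsets of `G` onto the
`R_e`-sub-bimodules of `R`, and `R_S ≅ R_T` (as `R_e`-bimodules) iff `S = T`. -/
def IsControlled (𝒜 : G → AddSubgroup R) : Prop :=
  (∀ H : Set G, IsSubBimodule 𝒜 (RH 𝒜 H)) ∧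
  Function.Injective (RH 𝒜) ∧
  (∀ P : AddSubgroup R, IsSubBimodule 𝒜 P → ∃ H : Set G, RH 𝒜 H = P) ∧
  (∀ S T : Set G, Nonempty (BimodIso 𝒜 (RH 𝒜 S) (RH 𝒜 T)) ↔ S = T)

/-- `P` is a (nonzero) simple `R_e`-bimodule contained in `R`. -/
def IsSimpleBimod (𝒜 : G → AddSubgroup R) (P : AddSubgroup R) : Prop :=
  P ≠ ⊥ ∧ ∀ Q : AddSubgroup R, Q ≤ P → IsSubBimodule 𝒜 Q → Q = ⊥ ∨ Q = P

/-- The product `AB` of two additive subgroups of `R`: all finite sums of products. -/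
def mulSub (A B : AddSubgroup R) : AddSubgroup R :=
  AddSubgroup.closure ((A : Set R) * (B : Set R))

/-- `R` is strongly graded: `R_g R_h = R_{g+h}` for all `g, h`. -/
def IsStronglyGraded (𝒜 : G → AddSubgroup R) : Prop :=
  ∀ g h : G, mulSub (𝒜 g) (𝒜 h) = 𝒜 (g + h)

/-- `C_R(R_e) = Z(R_e)` as subsets of `R`. -/
def CentralizerEqCenter (𝒜 : G → AddSubgroup R) : Prop :=
  {x : R | ∀ r ∈ 𝒜 0, x * r = r * x} = {x : R | x ∈ 𝒜 0 ∧ ∀ r ∈ 𝒜 0, x * r = r * x}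

/-- A two-sided ideal `I` is graded if each homogeneous component of each of its
elements again lies in `I` (equivalently, `I = ⊕_g (I ∩ R_g)`). -/
def IsGradedIdeal (𝒜 : G → AddSubgroup R) [GradedRing 𝒜] (I : TwoSidedIdeal R) : Prop :=
  ∀ x ∈ I, ∀ g : G, (DirectSum.decompose 𝒜 x g : R) ∈ I

/-- `R` is graded simple: the only graded two-sided ideals are `{0}` and `R`. -/
def IsGradedSimple (𝒜 : G → AddSubgroup R) [GradedRing 𝒜] : Prop :=
  ∀ I : TwoSidedIdeal R, IsGradedIdeal 𝒜 I → I = ⊥ ∨ I = ⊤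

/-! ### Auxiliary infrastructure -/

section Aux

variable (𝒜 : G → AddSubgroup R) [GradedRing 𝒜]

/-- The projection onto the `g`-component, as an additive map `R →+ R`. -/
noncomputable def prHom (g : G) : R →+ R :=
  AddMonoidHom.mk' (fun x => (DirectSum.decompose 𝒜 x g : R))
    (fun x y => by simp [DirectSum.decompose_add])

lemma prHom_apply (g : G) (x : R) : prHom 𝒜 g x = (DirectSum.decompose 𝒜 x g : R) := rfl

lemma prHom_mem (g : G) (x : R) : prHom 𝒜 g x ∈ 𝒜 g := SetLike.coe_mem _

lemma prHom_of_mem_same {g : G} {x : R} (hx : x ∈ 𝒜 g) : prHom 𝒜 g x = x :=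
  DirectSum.decompose_of_mem_same 𝒜 hx

lemma prHom_of_mem_ne {g h : G} {x : R} (hx : x ∈ 𝒜 h) (hne : h ≠ g) : prHom 𝒜 g x = 0 :=
  DirectSum.decompose_of_mem_ne 𝒜 hx hne

lemma prHom_mul_left {a : R} (ha : a ∈ 𝒜 0) (x : R) (g : G) :
    prHom 𝒜 g (a * x) = a * prHom 𝒜 g x := by
  induction x using DirectSum.Decomposition.inductionOn 𝒜 with
  | zero => simp
  | homogeneous m =>
    rename_i i
    have hm : (m : R) ∈ 𝒜 i := m.2
    have ham : a * (m : R) ∈ 𝒜 i := by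
      simpa using SetLike.mul_mem_graded ha hm
    by_cases hgi : i = g
    · subst hgi
      rw [prHom_of_mem_same 𝒜 ham, prHom_of_mem_same 𝒜 hm]
    · rw [prHom_of_mem_ne 𝒜 ham hgi, prHom_of_mem_ne 𝒜 hm hgi, mul_zero]
  | add x y hx hy => rw [mul_add, map_add, map_add, hx, hy, mul_add]

lemma prHom_mul_right {a : R} (ha : a ∈ 𝒜 0) (x : R) (g : G) :
    prHom 𝒜 g (x * a) = prHom 𝒜 g x * a := by
  induction x using DirectSum.Decomposition.inductionOn 𝒜 with
  | zero => simp
  | homogeneous m =>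
    rename_i i
    have hm : (m : R) ∈ 𝒜 i := m.2
    have ham : (m : R) * a ∈ 𝒜 i := by
      simpa using SetLike.mul_mem_graded hm ha
    by_cases hgi : i = g
    · subst hgi
      rw [prHom_of_mem_same 𝒜 ham, prHom_of_mem_same 𝒜 hm]
    · rw [prHom_of_mem_ne 𝒜 ham hgi, prHom_of_mem_ne 𝒜 hm hgi, zero_mul]
  | add x y hx hy => rw [add_mul, map_add, map_add, hx, hy, add_mul]

lemma eq_zero_of_prHom_eq_zero {x : R} (h : ∀ g, prHom 𝒜 g x = 0) : x = 0 := by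
  classical
  rw [← DirectSum.sum_support_decompose 𝒜 x]
  exact Finset.sum_eq_zero fun g _ => h g

/-- There is a finite bound on the support. -/
lemma exists_suppBound (x : R) : ∃ s : Finset G, ∀ g ∉ s, prHom 𝒜 g x = 0 := by
  classical
  refine ⟨(DirectSum.decompose 𝒜 x).support, fun g hg => ?_⟩
  have : (DirectSum.decompose 𝒜 x) g = 0 := DFinsupp.notMem_support_iff.mp hg
  rw [prHom_apply, this, ZeroMemClass.coe_zero]

lemma eq_sum_prHom (s : Finset G) (x : R) (h : ∀ g ∉ s, prHom 𝒜 g x = 0) :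
    x = ∑ g ∈ s, prHom 𝒜 g x := by
  classical
  conv_lhs => rw [← DirectSum.sum_support_decompose 𝒜 x]
  refine Finset.sum_subset ?_ ?_
  · intro g hg
    by_contra hgs
    exact (DFinsupp.mem_support_iff.mp hg) (by
      have := h g hgs
      rw [prHom_apply] at this
      exact Subtype.ext this)
  · intro g _ hg
    have : (DirectSum.decompose 𝒜 x) g = 0 := DFinsupp.notMem_support_iff.mp hg
    rw [this, ZeroMemClass.coe_zero]

lemma le_RH {H : Set G} {h : G} (hh : h ∈ H) : 𝒜 h ≤ RH 𝒜 H :=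
  le_iSup₂ (f := fun g (_ : g ∈ H) => 𝒜 g) h hh

lemma RH_singleton (g : G) : RH 𝒜 {g} = 𝒜 g := by simp [RH]

lemma RH_empty : RH 𝒜 (∅ : Set G) = ⊥ := by simp [RH]

lemma prHom_eq_zero_of_mem_RH {H : Set G} {x : R} (hx : x ∈ RH 𝒜 H) {g : G} (hg : g ∉ H) :
    prHom 𝒜 g x = 0 := by
  rw [RH] at hx
  rw [iSup_subtype'] at hx
  refine AddSubgroup.iSup_induction (C := fun y => prHom 𝒜 g y = 0) _ hx
    (fun i y hy => show prHom 𝒜 g y = 0 from prHom_of_mem_ne 𝒜 hy (fun he => hg (he ▸ i.2))) (map_zero _)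
    (fun y z hy hz => by rw [map_add, hy, hz, add_zero])

lemma mem_RH_of_prHom {H : Set G} {x : R} (h : ∀ g ∉ H, prHom 𝒜 g x = 0) : x ∈ RH 𝒜 H := by
  classical
  obtain ⟨s, hs⟩ := exists_suppBound 𝒜 x
  rw [eq_sum_prHom 𝒜 s x hs]
  refine AddSubgroup.sum_mem _ fun g _ => ?_
  by_cases hg : g ∈ H
  · exact le_RH 𝒜 hg (prHom_mem 𝒜 g x)
  · rw [h g hg]; exact zero_mem _

lemma isSubBimodule_RH (H : Set G) : IsSubBimodule 𝒜 (RH 𝒜 H) := by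
  intro a ha x hx
  constructor
  · exact mem_RH_of_prHom 𝒜 fun g hg => by
      rw [prHom_mul_left 𝒜 ha, prHom_eq_zero_of_mem_RH 𝒜 hx hg, mul_zero]
  · exact mem_RH_of_prHom 𝒜 fun g hg => by
      rw [prHom_mul_right 𝒜 ha, prHom_eq_zero_of_mem_RH 𝒜 hx hg, zero_mul]

lemma isSubBimodule_graded (g : G) : IsSubBimodule 𝒜 (𝒜 g) := by
  intro a ha x hx
  exact ⟨by simpa using SetLike.mul_mem_graded ha hx,
    by simpa using SetLike.mul_mem_graded hx ha⟩

/-! ### Constructing bimodule isomorphisms -/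

lemma bimodIso_of_hom {g h : G}
    (hsg : IsSimpleBimod 𝒜 (𝒜 g)) (hsh : IsSimpleBimod 𝒜 (𝒜 h))
    (Θ : (𝒜 g) →+ R)
    (hmem : ∀ r, Θ r ∈ 𝒜 h)
    (hleft : ∀ (a r : R) (_ : a ∈ 𝒜 0) (hr : r ∈ 𝒜 g) (har : a * r ∈ 𝒜 g),
      Θ ⟨a * r, har⟩ = a * Θ ⟨r, hr⟩)
    (hright : ∀ (a r : R) (_ : a ∈ 𝒜 0) (hr : r ∈ 𝒜 g) (hra : r * a ∈ 𝒜 g),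
      Θ ⟨r * a, hra⟩ = Θ ⟨r, hr⟩ * a)
    (hnz : ∃ r, Θ r ≠ 0) :
    Nonempty (BimodIso 𝒜 (𝒜 g) (𝒜 h)) := by
  classical
  -- the kernel, as a subgroup of R
  set K : AddSubgroup R := AddSubgroup.map (𝒜 g).subtype Θ.ker with hK
  have hKle : K ≤ 𝒜 g := by
    rintro y ⟨r, _, rfl⟩; exact r.2
  have hKsub : IsSubBimodule 𝒜 K := by
    rintro a ha y ⟨r, hr, rfl⟩
    have h1 : a * (r : R) ∈ 𝒜 g := by simpa using SetLike.mul_mem_graded ha r.2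
    have h2 : (r : R) * a ∈ 𝒜 g := by simpa using SetLike.mul_mem_graded r.2 ha
    have hr0 : Θ r = 0 := AddMonoidHom.mem_ker.mp hr
    constructor
    · refine ⟨⟨a * (r : R), h1⟩, AddMonoidHom.mem_ker.mpr ?_, rfl⟩
      rw [hleft a r ha r.2 h1, hr0, mul_zero]
    · refine ⟨⟨(r : R) * a, h2⟩, AddMonoidHom.mem_ker.mpr ?_, rfl⟩
      rw [hright a r ha r.2 h2, hr0, zero_mul]
  have hKbot : K = ⊥ := by
    rcases hsg.2 K hKle hKsub with h1 | h1
    · exact h1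
    · exfalso
      obtain ⟨r, hr⟩ := hnz
      apply hr
      have : (r : R) ∈ K := h1.symm ▸ r.2
      obtain ⟨k, hk, hkr⟩ := this
      have : k = r := Subtype.ext hkr
      rw [← this]; exact hk
  have hinj : Function.Injective Θ := by
    intro r r' hrr
    have : Θ (r - r') = 0 := by rw [map_sub, hrr, sub_self]
    have hmem' : ((r - r' : 𝒜 g) : R) ∈ K := ⟨r - r', this, rfl⟩
    rw [hKbot] at hmem'
    have : ((r - r' : 𝒜 g) : R) = 0 := hmem'
    have : (r - r' : 𝒜 g) = 0 := Subtype.ext this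
    exact sub_eq_zero.mp this
  -- the range
  have hRle : Θ.range ≤ 𝒜 h := by rintro y ⟨r, rfl⟩; exact hmem r
  have hRsub : IsSubBimodule 𝒜 Θ.range := by
    rintro a ha y ⟨r, rfl⟩
    have h1 : a * (r : R) ∈ 𝒜 g := by simpa using SetLike.mul_mem_graded ha r.2
    have h2 : (r : R) * a ∈ 𝒜 g := by simpa using SetLike.mul_mem_graded r.2 ha
    exact ⟨⟨⟨a * (r : R), h1⟩, hleft a r ha r.2 h1⟩,
           ⟨⟨(r : R) * a, h2⟩, hright a r ha r.2 h2⟩⟩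
  have hRtop : Θ.range = 𝒜 h := by
    rcases hsh.2 Θ.range hRle hRsub with h1 | h1
    · exfalso
      obtain ⟨r, hr⟩ := hnz
      apply hr
      have : Θ r ∈ Θ.range := ⟨r, rfl⟩
      rw [h1] at this
      exact this
    · exact h1
  set Θ' : (𝒜 g) →+ (𝒜 h) := Θ.codRestrict (𝒜 h) hmem with hΘ'
  have hcoe : ∀ r, (Θ' r : R) = Θ r := fun r => rfl
  have hbij : Function.Bijective Θ' := by
    constructor
    · intro r r' hrr
      exact hinj (by rw [← hcoe, ← hcoe, hrr])
    · intro t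
      have : (t : R) ∈ Θ.range := hRtop.symm ▸ t.2
      obtain ⟨r, hr⟩ := this
      exact ⟨r, Subtype.ext (by rw [hcoe, hr])⟩
  refine ⟨⟨AddEquiv.ofBijective Θ' hbij, ?_, ?_⟩⟩
  · intro a x ha hx hax
    show (Θ' ⟨a * x, hax⟩ : R) = a * (Θ' ⟨x, hx⟩ : R)
    rw [hcoe, hcoe, hleft a x ha hx hax]
  · intro a x ha hx hxa
    show (Θ' ⟨x * a, hxa⟩ : R) = (Θ' ⟨x, hx⟩ : R) * a
    rw [hcoe, hcoe, hright a x ha hx hxa]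

/-! ### The sub-bimodule generated by an element -/

def bimodGen (x : R) : AddSubgroup R :=
  AddSubgroup.closure {y | ∃ a b, a ∈ 𝒜 0 ∧ b ∈ 𝒜 0 ∧ y = a * x * b}

lemma mem_bimodGen_self (x : R) : x ∈ bimodGen 𝒜 x :=
  AddSubgroup.subset_closure ⟨1, 1, SetLike.one_mem_graded 𝒜, SetLike.one_mem_graded 𝒜,
    by rw [mul_one, one_mul]⟩

lemma isSubBimodule_bimodGen (x : R) : IsSubBimodule 𝒜 (bimodGen 𝒜 x) := by
  intro a ha y hy
  induction hy using AddSubgroup.closure_induction with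
  | mem y hy =>
    obtain ⟨a₀, b₀, ha₀, hb₀, rfl⟩ := hy
    constructor
    · exact AddSubgroup.subset_closure ⟨a * a₀, b₀,
        by simpa using SetLike.mul_mem_graded ha ha₀, hb₀, by rw [mul_assoc a, mul_assoc a]⟩
    · exact AddSubgroup.subset_closure ⟨a₀, b₀ * a, ha₀,
        by simpa using SetLike.mul_mem_graded hb₀ ha, by rw [mul_assoc]⟩
  | zero =>
    exact ⟨by rw [mul_zero]; exact zero_mem _, by rw [zero_mul]; exact zero_mem _⟩
  | add y z _ _ hy hz =>
    exact ⟨by rw [mul_add]; exact add_mem hy.1 hz.1, by rw [add_mul]; exact add_mem hy.2 hz.2⟩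
  | neg y _ hy =>
    exact ⟨by rw [mul_neg]; exact neg_mem hy.1, by rw [neg_mul]; exact neg_mem hy.2⟩

lemma bimodGen_le {P : AddSubgroup R} (hP : IsSubBimodule 𝒜 P) {x : R} (hx : x ∈ P) :
    bimodGen 𝒜 x ≤ P := by
  rw [bimodGen, AddSubgroup.closure_le]
  rintro y ⟨a, b, ha, hb, rfl⟩
  exact (hP b hb (a * x) (hP a ha x hx).1).2

lemma prHom_bimodGen_zero {x : R} {g : G} (hx : prHom 𝒜 g x = 0) :
    ∀ y ∈ bimodGen 𝒜 x, prHom 𝒜 g y = 0 := by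
  intro y hy
  induction hy using AddSubgroup.closure_induction with
  | mem y hy =>
    obtain ⟨a, b, ha, hb, rfl⟩ := hy
    rw [prHom_mul_right 𝒜 hb, prHom_mul_left 𝒜 ha, hx, mul_zero, zero_mul]
  | zero => exact map_zero _
  | add y z _ _ hy hz => rw [map_add, hy, hz, add_zero]
  | neg y _ hy => rw [map_neg, hy, neg_zero]

lemma isSubBimodule_inf {P Q : AddSubgroup R} (hP : IsSubBimodule 𝒜 P)
    (hQ : IsSubBimodule 𝒜 Q) : IsSubBimodule 𝒜 (P ⊓ Q) := by
  intro a ha x hx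
  exact ⟨⟨(hP a ha x hx.1).1, (hQ a ha x hx.2).1⟩, ⟨(hP a ha x hx.1).2, (hQ a ha x hx.2).2⟩⟩

lemma isSubBimodule_kerPr (g : G) : IsSubBimodule 𝒜 (prHom 𝒜 g).ker := by
  intro a ha x hx
  simp only [AddMonoidHom.mem_ker] at hx ⊢
  rw [prHom_mul_left 𝒜 ha, prHom_mul_right 𝒜 ha, hx, mul_zero, zero_mul]
  exact ⟨rfl, rfl⟩

lemma isSubBimodule_map_pr {M : AddSubgroup R} (hM : IsSubBimodule 𝒜 M) (g : G) :
    IsSubBimodule 𝒜 (AddSubgroup.map (prHom 𝒜 g) M) := by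
  rintro a ha y ⟨m, hm, rfl⟩
  exact ⟨⟨a * m, (hM a ha m hm).1, prHom_mul_left 𝒜 ha m g⟩,
         ⟨m * a, (hM a ha m hm).2, prHom_mul_right 𝒜 ha m g⟩⟩

lemma map_pr_le (M : AddSubgroup R) (g : G) :
    AddSubgroup.map (prHom 𝒜 g) M ≤ 𝒜 g := by
  rintro y ⟨m, _, rfl⟩; exact prHom_mem 𝒜 g m

/-- Construct an iso `𝒜 g₁ ≃ 𝒜 g₂` from a sub-bimodule `M` coupling the two components. -/
lemma bimodIso_of_coupling {M : AddSubgroup R} (hM : IsSubBimodule 𝒜 M) {g₁ g₂ : G}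
    (hs1 : IsSimpleBimod 𝒜 (𝒜 g₁)) (hs2 : IsSimpleBimod 𝒜 (𝒜 g₂))
    (hA : ∀ y ∈ M, prHom 𝒜 g₁ y = 0 → prHom 𝒜 g₂ y = 0)
    (hsurj : ∀ r ∈ 𝒜 g₁, ∃ y ∈ M, prHom 𝒜 g₁ y = r)
    (hnz : ∃ y ∈ M, prHom 𝒜 g₂ y ≠ 0) :
    Nonempty (BimodIso 𝒜 (𝒜 g₁) (𝒜 g₂)) := by
  classical
  have hc : ∀ r : 𝒜 g₁, ∃ y, y ∈ M ∧ prHom 𝒜 g₁ y = (r : R) := by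
    intro r
    obtain ⟨y, hy, hy'⟩ := hsurj r r.2
    exact ⟨y, hy, hy'⟩
  choose c hcM hcpr using hc
  set f : (𝒜 g₁) → R := fun r => prHom 𝒜 g₂ (c r) with hf
  have huniq : ∀ (r : 𝒜 g₁) (y : R), y ∈ M → prHom 𝒜 g₁ y = (r : R) → prHom 𝒜 g₂ y = f r := by
    intro r y hy hpr
    have hd : y - c r ∈ M := sub_mem hy (hcM r)
    have : prHom 𝒜 g₁ (y - c r) = 0 := by rw [map_sub, hpr, hcpr r, sub_self]
    have h2 : prHom 𝒜 g₂ (y - c r) = 0 := hA _ hd this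
    rw [map_sub] at h2
    have := sub_eq_zero.mp h2
    rw [this]
  have hadd : ∀ r r' : 𝒜 g₁, f (r + r') = f r + f r' := by
    intro r r'
    have h1 : c r + c r' ∈ M := add_mem (hcM r) (hcM r')
    have h2 : prHom 𝒜 g₁ (c r + c r') = ((r + r' : 𝒜 g₁) : R) := by
      rw [map_add, hcpr r, hcpr r']; rfl
    have := huniq (r + r') (c r + c r') h1 h2
    rw [← this, map_add]
  set Θ : (𝒜 g₁) →+ R := AddMonoidHom.mk' f hadd with hΘ
  have hmem : ∀ r, Θ r ∈ 𝒜 g₂ := fun r => prHom_mem 𝒜 g₂ (c r)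
  refine bimodIso_of_hom 𝒜 hs1 hs2 Θ hmem ?_ ?_ ?_
  · intro a r ha hr har
    have h1 : a * c ⟨r, hr⟩ ∈ M := (hM a ha _ (hcM ⟨r, hr⟩)).1
    have h2 : prHom 𝒜 g₁ (a * c ⟨r, hr⟩) = ((⟨a * r, har⟩ : 𝒜 g₁) : R) := by
      rw [prHom_mul_left 𝒜 ha, hcpr ⟨r, hr⟩]
    have := huniq ⟨a * r, har⟩ _ h1 h2
    show f ⟨a * r, har⟩ = a * f ⟨r, hr⟩
    rw [← this, prHom_mul_left 𝒜 ha]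
  · intro a r ha hr hra
    have h1 : c ⟨r, hr⟩ * a ∈ M := (hM a ha _ (hcM ⟨r, hr⟩)).2
    have h2 : prHom 𝒜 g₁ (c ⟨r, hr⟩ * a) = ((⟨r * a, hra⟩ : 𝒜 g₁) : R) := by
      rw [prHom_mul_right 𝒜 ha, hcpr ⟨r, hr⟩]
    have := huniq ⟨r * a, hra⟩ _ h1 h2
    show f ⟨r * a, hra⟩ = f ⟨r, hr⟩ * a
    rw [← this, prHom_mul_right 𝒜 ha]
  · obtain ⟨y, hy, hy'⟩ := hnz
    refine ⟨⟨prHom 𝒜 g₁ y, prHom_mem 𝒜 g₁ y⟩, ?_⟩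
    have := huniq ⟨prHom 𝒜 g₁ y, prHom_mem 𝒜 g₁ y⟩ y hy rfl
    show f _ ≠ 0
    rw [← this]
    exact hy'

/-! ### The key lemma: every sub-bimodule is graded -/

lemma prHom_mem_of_isSubBimodule
    (hsimple : ∀ g : G, IsSimpleBimod 𝒜 (𝒜 g))
    (hiso : ∀ g h : G, Nonempty (BimodIso 𝒜 (𝒜 g) (𝒜 h)) → g = h)
    {P : AddSubgroup R} (hP : IsSubBimodule 𝒜 P) :
    ∀ x ∈ P, ∀ g : G, prHom 𝒜 g x ∈ P := by
  classical
  suffices aux : ∀ (n : ℕ) (s : Finset G), s.card ≤ n → ∀ x ∈ P,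
      (∀ g ∉ s, prHom 𝒜 g x = 0) → ∀ g : G, prHom 𝒜 g x ∈ P by
    intro x hx g
    obtain ⟨s, hs⟩ := exists_suppBound 𝒜 x
    exact aux s.card s le_rfl x hx hs g
  intro n
  induction n with
  | zero =>
    intro s hs x _ hb g
    have : s = ∅ := Finset.card_eq_zero.mp (Nat.le_zero.mp hs)
    rw [hb g (by simp [this])]
    exact zero_mem _
  | succ n ih =>
    intro s hs x hx hb g
    set T : Finset G := s.filter (fun g => prHom 𝒜 g x ≠ 0) with hT
    have hTs : T ⊆ s := Finset.filter_subset _ _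
    have hbT : ∀ g ∉ T, prHom 𝒜 g x = 0 := by
      intro g hg
      by_cases hgs : g ∈ s
      · by_contra hne
        exact hg (Finset.mem_filter.mpr ⟨hgs, hne⟩)
      · exact hb g hgs
    by_cases hcard : T.card ≤ 1
    · -- at most one homogeneous component: trivial
      interval_cases h : T.card
      · -- T = ∅ : all components vanish
        have hT0 : T = ∅ := Finset.card_eq_zero.mp h
        rw [hbT g (by simp [hT0])]
        exact zero_mem _
      · obtain ⟨g₀, hg₀⟩ := Finset.card_eq_one.mp h
        have hxeq : x = prHom 𝒜 g₀ x := by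
          have := eq_sum_prHom 𝒜 T x hbT
          rw [hg₀, Finset.sum_singleton] at this
          exact this
        by_cases hgg : g = g₀
        · subst hgg
          rw [← hxeq]
          exact hx
        · rw [hbT g (by simp [hg₀, hgg])]
          exact zero_mem _
    · -- at least two components
      push_neg at hcard
      obtain ⟨g₁, hg₁, g₂, hg₂, hne⟩ := Finset.one_lt_card.mp hcard
      have hg₁s : g₁ ∈ s := hTs hg₁
      have hg₂s : g₂ ∈ s := hTs hg₂
      have hg₁nz : prHom 𝒜 g₁ x ≠ 0 := (Finset.mem_filter.mp hg₁).2
      have hg₂nz : prHom 𝒜 g₂ x ≠ 0 := (Finset.mem_filter.mp hg₂).2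
      set M : AddSubgroup R := bimodGen 𝒜 x with hM
      have hMsub : IsSubBimodule 𝒜 M := isSubBimodule_bimodGen 𝒜 x
      have hMP : M ≤ P := bimodGen_le 𝒜 hP hx
      have hMs : ∀ y ∈ M, ∀ g ∉ s, prHom 𝒜 g y = 0 :=
        fun y hy g hg => prHom_bimodGen_zero 𝒜 (hb g hg) y hy
      -- reduction step: if we can split off one component, we are done by induction
      have reduce : ∀ (k₁ k₂ : G), k₁ ∈ s → k₂ ∈ s → k₁ ≠ k₂ →
          (∃ y, y ∈ M ∧ prHom 𝒜 k₁ y = 0 ∧ prHom 𝒜 k₂ y = prHom 𝒜 k₂ x) →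
          ∀ g : G, prHom 𝒜 g x ∈ P := by
        rintro k₁ k₂ hk₁ hk₂ hkne ⟨y, hyM, hy1, hy2⟩ g
        have hyP : y ∈ P := hMP hyM
        have hcard1 : (s.erase k₁).card ≤ n := by
          rw [Finset.card_erase_of_mem hk₁]; omega
        have hcard2 : (s.erase k₂).card ≤ n := by
          rw [Finset.card_erase_of_mem hk₂]; omega
        have hby : ∀ g ∉ s.erase k₁, prHom 𝒜 g y = 0 := by
          intro g hg
          by_cases hgk : g = k₁
          · rw [hgk]; exact hy1
          · exact hMs y hyM g fun hgs => hg (Finset.mem_erase.mpr ⟨hgk, hgs⟩)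
        have hbxy : ∀ g ∉ s.erase k₂, prHom 𝒜 g (x - y) = 0 := by
          intro g hg
          by_cases hgk : g = k₂
          · rw [hgk, map_sub, hy2, sub_self]
          · have hgs : g ∉ s := fun hgs => hg (Finset.mem_erase.mpr ⟨hgk, hgs⟩)
            rw [map_sub, hb g hgs, hMs y hyM g hgs, sub_self]
        have h1 := ih (s.erase k₁) hcard1 y hyP hby g
        have h2 := ih (s.erase k₂) hcard2 (x - y) (sub_mem hx hyP) hbxy g
        have : prHom 𝒜 g x = prHom 𝒜 g (x - y) + prHom 𝒜 g y := by
          rw [map_sub, sub_add_cancel]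
        rw [this]
        exact add_mem h2 h1
      -- the coupled kernels
      set K₁ : AddSubgroup R := M ⊓ (prHom 𝒜 g₁).ker with hK₁
      set K₂ : AddSubgroup R := M ⊓ (prHom 𝒜 g₂).ker with hK₂
      have hK₁sub : IsSubBimodule 𝒜 K₁ := isSubBimodule_inf 𝒜 hMsub (isSubBimodule_kerPr 𝒜 g₁)
      have hK₂sub : IsSubBimodule 𝒜 K₂ := isSubBimodule_inf 𝒜 hMsub (isSubBimodule_kerPr 𝒜 g₂)
      rcases (hsimple g₂).2 (AddSubgroup.map (prHom 𝒜 g₂) K₁) (map_pr_le 𝒜 K₁ g₂)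
          (isSubBimodule_map_pr 𝒜 hK₁sub g₂) with hQ₂ | hQ₂
      · rcases (hsimple g₁).2 (AddSubgroup.map (prHom 𝒜 g₁) K₂) (map_pr_le 𝒜 K₂ g₁)
            (isSubBimodule_map_pr 𝒜 hK₂sub g₁) with hQ₁ | hQ₁
        · -- both kernels coupled: get an isomorphism 𝒜 g₁ ≅ 𝒜 g₂, contradiction
          exfalso
          apply hne
          apply hiso g₁ g₂
          have hA : ∀ y ∈ M, prHom 𝒜 g₁ y = 0 → prHom 𝒜 g₂ y = 0 := by
            intro y hyM hy1
            have : prHom 𝒜 g₂ y ∈ AddSubgroup.map (prHom 𝒜 g₂) K₁ :=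
              ⟨y, ⟨hyM, AddMonoidHom.mem_ker.mpr hy1⟩, rfl⟩
            rw [hQ₂] at this
            exact this
          have hsurj : ∀ r ∈ 𝒜 g₁, ∃ y ∈ M, prHom 𝒜 g₁ y = r := by
            intro r hr
            rcases (hsimple g₁).2 (AddSubgroup.map (prHom 𝒜 g₁) M) (map_pr_le 𝒜 M g₁)
                (isSubBimodule_map_pr 𝒜 hMsub g₁) with hI | hI
            · exfalso
              apply hg₁nz
              have : prHom 𝒜 g₁ x ∈ AddSubgroup.map (prHom 𝒜 g₁) M :=
                ⟨x, mem_bimodGen_self 𝒜 x, rfl⟩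
              rw [hI] at this
              exact this
            · have : r ∈ AddSubgroup.map (prHom 𝒜 g₁) M := hI.symm ▸ hr
              obtain ⟨y, hyM, hyr⟩ := this
              exact ⟨y, hyM, hyr⟩
          exact bimodIso_of_coupling 𝒜 hMsub (hsimple g₁) (hsimple g₂) hA hsurj
            ⟨x, mem_bimodGen_self 𝒜 x, hg₂nz⟩
        · -- can split off the g₁ component
          have : prHom 𝒜 g₁ x ∈ AddSubgroup.map (prHom 𝒜 g₁) K₂ := hQ₁.symm ▸ prHom_mem 𝒜 g₁ x
          obtain ⟨y, hyK, hyr⟩ := this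
          exact reduce g₂ g₁ hg₂s hg₁s hne.symm
            ⟨y, hyK.1, AddMonoidHom.mem_ker.mp hyK.2, hyr⟩ g
      · -- can split off the g₂ component
        have : prHom 𝒜 g₂ x ∈ AddSubgroup.map (prHom 𝒜 g₂) K₁ := hQ₂.symm ▸ prHom_mem 𝒜 g₂ x
        obtain ⟨y, hyK, hyr⟩ := this
        exact reduce g₁ g₂ hg₁s hg₂s hne
          ⟨y, hyK.1, AddMonoidHom.mem_ker.mp hyK.2, hyr⟩ g

/-! ### The remaining ingredients -/

lemma exists_ne_zero_of_ne_bot {A : AddSubgroup R} (h : A ≠ ⊥) : ∃ x ∈ A, x ≠ 0 := by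
  by_contra hc
  push_neg at hc
  exact h ((AddSubgroup.eq_bot_iff_forall A).mpr fun x hx => hc x hx)

noncomputable def bimodIso_symm {P Q : AddSubgroup R} (hP : IsSubBimodule 𝒜 P)
    (φ : BimodIso 𝒜 P Q) : BimodIso 𝒜 Q P := by
  refine ⟨φ.toEquiv.symm, ?_, ?_⟩
  · intro a x ha hx hax
    set u : P := φ.toEquiv.symm ⟨x, hx⟩ with hu
    have huP : (u : R) ∈ P := u.2
    have hau : a * (u : R) ∈ P := (hP a ha _ huP).1
    have h1 : (φ.toEquiv ⟨a * (u : R), hau⟩ : R) = a * (φ.toEquiv ⟨(u : R), huP⟩ : R) :=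
      φ.map_left a (u : R) ha huP hau
    have h2 : (⟨(u : R), huP⟩ : P) = u := rfl
    have h3 : φ.toEquiv u = ⟨x, hx⟩ := by rw [hu]; exact φ.toEquiv.apply_symm_apply _
    rw [h2, h3] at h1
    have h4 : φ.toEquiv ⟨a * (u : R), hau⟩ = ⟨a * x, hax⟩ := Subtype.ext h1
    have h5 : (⟨a * (u : R), hau⟩ : P) = φ.toEquiv.symm ⟨a * x, hax⟩ := by
      rw [← h4, φ.toEquiv.symm_apply_apply]
    rw [← h5]
  · intro a x ha hx hxa
    set u : P := φ.toEquiv.symm ⟨x, hx⟩ with hu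
    have huP : (u : R) ∈ P := u.2
    have hua : (u : R) * a ∈ P := (hP a ha _ huP).2
    have h1 : (φ.toEquiv ⟨(u : R) * a, hua⟩ : R) = (φ.toEquiv ⟨(u : R), huP⟩ : R) * a :=
      φ.map_right a (u : R) ha huP hua
    have h2 : (⟨(u : R), huP⟩ : P) = u := rfl
    have h3 : φ.toEquiv u = ⟨x, hx⟩ := by rw [hu]; exact φ.toEquiv.apply_symm_apply _
    rw [h2, h3] at h1
    have h4 : φ.toEquiv ⟨(u : R) * a, hua⟩ = ⟨x * a, hxa⟩ := Subtype.ext h1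
    have h5 : (⟨(u : R) * a, hua⟩ : P) = φ.toEquiv.symm ⟨x * a, hxa⟩ := by
      rw [← h4, φ.toEquiv.symm_apply_apply]
    rw [← h5]

lemma RH_injective (hsimple : ∀ g : G, IsSimpleBimod 𝒜 (𝒜 g)) :
    Function.Injective (RH 𝒜) := by
  have key : ∀ S T : Set G, RH 𝒜 S = RH 𝒜 T → S ⊆ T := by
    intro S T hST g hg
    obtain ⟨x, hxg, hxnz⟩ := exists_ne_zero_of_ne_bot (hsimple g).1
    have hx : x ∈ RH 𝒜 T := hST ▸ le_RH 𝒜 hg hxg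
    by_contra hgT
    exact hxnz (by rw [← prHom_of_mem_same 𝒜 hxg]; exact prHom_eq_zero_of_mem_RH 𝒜 hx hgT)
  intro S T hST
  exact Set.Subset.antisymm (key S T hST) (key T S hST.symm)

lemma RH_surjective (hsimple : ∀ g : G, IsSimpleBimod 𝒜 (𝒜 g))
    (hiso : ∀ g h : G, Nonempty (BimodIso 𝒜 (𝒜 g) (𝒜 h)) → g = h)
    {P : AddSubgroup R} (hP : IsSubBimodule 𝒜 P) : ∃ H : Set G, RH 𝒜 H = P := by
  refine ⟨{g : G | ∃ x ∈ P, prHom 𝒜 g x ≠ 0}, le_antisymm ?_ ?_⟩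
  · rw [RH]
    refine iSup₂_le fun h hh => ?_
    obtain ⟨x, hxP, hxnz⟩ := hh
    have hpr : prHom 𝒜 h x ∈ P := prHom_mem_of_isSubBimodule 𝒜 hsimple hiso hP x hxP h
    rcases (hsimple h).2 (𝒜 h ⊓ P) inf_le_left
        (isSubBimodule_inf 𝒜 (isSubBimodule_graded 𝒜 h) hP) with h0 | h0
    · exfalso
      apply hxnz
      have : prHom 𝒜 h x ∈ 𝒜 h ⊓ P := ⟨prHom_mem 𝒜 h x, hpr⟩
      rw [h0] at this
      exact this
    · calc 𝒜 h = 𝒜 h ⊓ P := h0.symm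
        _ ≤ P := inf_le_right
  · intro x hx
    refine mem_RH_of_prHom 𝒜 fun g hg => ?_
    by_contra hne
    exact hg ⟨x, hx, hne⟩

lemma subset_of_iso (hsimple : ∀ g : G, IsSimpleBimod 𝒜 (𝒜 g))
    (hiso : ∀ g h : G, Nonempty (BimodIso 𝒜 (𝒜 g) (𝒜 h)) → g = h)
    {S T : Set G} (φ : BimodIso 𝒜 (RH 𝒜 S) (RH 𝒜 T)) : S ⊆ T := by
  intro g hg
  obtain ⟨x, hxg, hxnz⟩ := exists_ne_zero_of_ne_bot (hsimple g).1
  have hxS : x ∈ RH 𝒜 S := le_RH 𝒜 hg hxg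
  set y : R := (φ.toEquiv ⟨x, hxS⟩ : R) with hy
  have hynz : y ≠ 0 := by
    intro h0
    apply hxnz
    have : φ.toEquiv ⟨x, hxS⟩ = 0 := Subtype.ext h0
    have h2 : (⟨x, hxS⟩ : RH 𝒜 S) = 0 := by
      apply φ.toEquiv.injective
      rw [this, map_zero]
    exact congrArg Subtype.val h2
  obtain ⟨h, hh⟩ : ∃ h : G, prHom 𝒜 h y ≠ 0 := by
    by_contra hall
    push_neg at hall
    exact hynz (eq_zero_of_prHom_eq_zero 𝒜 hall)
  have hhT : h ∈ T := by
    by_contra hhT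
    exact hh (prHom_eq_zero_of_mem_RH 𝒜 (φ.toEquiv ⟨x, hxS⟩).2 hhT)
  suffices hiso' : Nonempty (BimodIso 𝒜 (𝒜 g) (𝒜 h)) by
    rw [hiso g h hiso']; exact hhT
  set Θ : (𝒜 g) →+ R := AddMonoidHom.mk'
      (fun r => prHom 𝒜 h (φ.toEquiv ⟨(r : R), le_RH 𝒜 hg r.2⟩))
      (fun r r' => by
        have heq : (⟨((r + r' : 𝒜 g) : R), le_RH 𝒜 hg (r + r').2⟩ : RH 𝒜 S)
            = ⟨(r : R), le_RH 𝒜 hg r.2⟩ + ⟨(r' : R), le_RH 𝒜 hg r'.2⟩ := by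
          apply Subtype.ext; rfl
        show prHom 𝒜 h (φ.toEquiv ⟨((r + r' : 𝒜 g) : R), le_RH 𝒜 hg (r + r').2⟩ : R)
            = prHom 𝒜 h (φ.toEquiv ⟨(r : R), le_RH 𝒜 hg r.2⟩ : R)
              + prHom 𝒜 h (φ.toEquiv ⟨(r' : R), le_RH 𝒜 hg r'.2⟩ : R)
        rw [heq, map_add, AddSubgroup.coe_add, map_add]) with hΘ
  refine bimodIso_of_hom 𝒜 (hsimple g) (hsimple h) Θ
    (fun r => prHom_mem 𝒜 h _) ?_ ?_ ⟨⟨x, hxg⟩, ?_⟩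
  · intro a r ha hr har
    show prHom 𝒜 h (φ.toEquiv ⟨a * r, le_RH 𝒜 hg har⟩ : R)
        = a * prHom 𝒜 h (φ.toEquiv ⟨r, le_RH 𝒜 hg hr⟩ : R)
    rw [φ.map_left a r ha (le_RH 𝒜 hg hr) (le_RH 𝒜 hg har), prHom_mul_left 𝒜 ha]
  · intro a r ha hr hra
    show prHom 𝒜 h (φ.toEquiv ⟨r * a, le_RH 𝒜 hg hra⟩ : R)
        = prHom 𝒜 h (φ.toEquiv ⟨r, le_RH 𝒜 hg hr⟩ : R) * a
    rw [φ.map_right a r ha (le_RH 𝒜 hg hr) (le_RH 𝒜 hg hra), prHom_mul_right 𝒜 ha]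
  · show prHom 𝒜 h (φ.toEquiv ⟨x, le_RH 𝒜 hg hxg⟩ : R) ≠ 0
    have : (⟨x, le_RH 𝒜 hg hxg⟩ : RH 𝒜 S) = ⟨x, hxS⟩ := rfl
    rw [this]
    exact hh

lemma iso_cond (hsimple : ∀ g : G, IsSimpleBimod 𝒜 (𝒜 g))
    (hiso : ∀ g h : G, Nonempty (BimodIso 𝒜 (𝒜 g) (𝒜 h)) → g = h) (S T : Set G) :
    Nonempty (BimodIso 𝒜 (RH 𝒜 S) (RH 𝒜 T)) ↔ S = T := by
  constructor
  · rintro ⟨φ⟩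
    refine Set.Subset.antisymm (subset_of_iso 𝒜 hsimple hiso φ)
      (subset_of_iso 𝒜 hsimple hiso (bimodIso_symm 𝒜 (isSubBimodule_RH 𝒜 S) φ))
  · rintro rfl
    exact ⟨⟨AddEquiv.refl _, fun a x ha hx hax => rfl, fun a x ha hx hxa => rfl⟩⟩

end Aux

end Controlled

variable {G R : Type*} [AddGroup G] [DecidableEq G] [Ring R]

/-- `R` is `G`-controlled iff (a) each `R_g` is a simple `R_e`-bimodule and
(b) `R_g ≅ R_h` iff `g = h`. -/
theorem stmt9 (𝒜 : G → AddSubgroup R) [GradedRing 𝒜] :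
    Controlled.IsControlled 𝒜 ↔
      ((∀ g : G, Controlled.IsSimpleBimod 𝒜 (𝒜 g)) ∧
        (∀ g h : G, Nonempty (Controlled.BimodIso 𝒜 (𝒜 g) (𝒜 h)) ↔ g = h)) := by
  open Controlled in
  constructor
  · rintro ⟨hsub, hinj, hsurj, hiso⟩
    have hbotne : ∀ g : G, 𝒜 g ≠ ⊥ := by
      intro g h0
      have h1 : RH 𝒜 {g} = RH 𝒜 (∅ : Set G) := by
        rw [RH_singleton, RH_empty, h0]
      exact Set.singleton_ne_empty g (hinj h1)
    constructor
    · intro g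
      refine ⟨hbotne g, fun Q hQle hQsub => ?_⟩
      obtain ⟨H, hH⟩ := hsurj Q hQsub
      have hHsub : H ⊆ {g} := by
        intro h hhH
        have hle : 𝒜 h ≤ 𝒜 g := le_trans (le_RH 𝒜 hhH) (hH ▸ hQle)
        by_contra hne
        have hne' : h ≠ g := hne
        have hbot : 𝒜 h = ⊥ := by
          rw [AddSubgroup.eq_bot_iff_forall]
          intro x hx
          have hxg : x ∈ 𝒜 g := hle hx
          rw [← prHom_of_mem_same 𝒜 hx]
          exact prHom_of_mem_ne 𝒜 hxg (Ne.symm hne')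
        exact hbotne h hbot
      rcases Set.subset_singleton_iff_eq.mp hHsub with h1 | h1
      · left; rw [← hH, h1, RH_empty]
      · right; rw [← hH, h1, RH_singleton]
    · intro g h
      rw [← RH_singleton 𝒜 g, ← RH_singleton 𝒜 h, hiso]
      exact Set.singleton_eq_singleton_iff
  · rintro ⟨hsimple, hiso⟩
    have hiso' : ∀ g h : G, Nonempty (BimodIso 𝒜 (𝒜 g) (𝒜 h)) → g = h :=
      fun g h hne => (hiso g h).mp hne
    exact ⟨isSubBimodule_RH 𝒜, RH_injective 𝒜 hsimple,
      fun P hP => RH_surjective 𝒜 hsimple hiso' hP,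
      iso_cond 𝒜 hsimple hiso'⟩
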